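/- Let U ⊆ ℝ⁴ be open and let u : U → ℝ be a smooth solution of the equation u₁₃ + u₂₄ + (x₁x₃+x₂x₄)(u₁₁u₂₂ − u₁₂²) = 0 on U. Let λ ∈ ℝ satisfy x₄ + λx₃ ≠ 0 for all x ∈ U, and define the vector fields X = ∂₄ + (x₁x₃+x₂x₄)(u₁₁∂₂ − u₁₂∂₁) + ((x₁−λx₂)/(x₄+λx₃))∂₁ and Y = ∂₃ + (x₁x₃+x₂x₄)(u₂₂∂₁ − u₁₂∂₂) − ((x₁−λx₂)/(x₄+λx₃))∂₂. Then for every x ∈ U, the vector [X,Y](x) lies in the linear span of X(x) and Y(x). -/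

import Mathlib

open scoped ContDiff

noncomputable section

/-- `pd i u x` is the partial derivative `∂u/∂xᵢ` at `x`. -/
def pd {n : ℕ} (i : Fin n) (u : (Fin n → ℝ) → ℝ) (x : Fin n → ℝ) : ℝ :=
  fderiv ℝ u x (Pi.single i 1)

/-- `pd2 i j u x` is the second partial derivative `∂²u/∂xᵢ∂xⱼ` at `x`. -/
def pd2 {n : ℕ} (i j : Fin n) (u : (Fin n → ℝ) → ℝ) (x : Fin n → ℝ) : ℝ :=
  pd i (pd j u) x

/-- Lie bracket of vector fields : `[X,Y](x) = DY(x)(X(x)) − DX(x)(Y(x))`. -/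
def lieBr {n : ℕ} (X Y : (Fin n → ℝ) → (Fin n → ℝ)) (x : Fin n → ℝ) : Fin n → ℝ :=
  fderiv ℝ Y x (X x) - fderiv ℝ X x (Y x)

/-! ### Auxiliary lemmas -/

private lemma pd_congr {n : ℕ} {φ ψ : (Fin n → ℝ) → ℝ} {x : Fin n → ℝ} (i : Fin n)
    (h : φ =ᶠ[nhds x] ψ) : pd i φ x = pd i ψ x := by
  unfold pd; rw [h.fderiv_eq]

private lemma pd_add {n : ℕ} {φ ψ : (Fin n → ℝ) → ℝ} {x : Fin n → ℝ} (i : Fin n)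
    (hφ : DifferentiableAt ℝ φ x) (hψ : DifferentiableAt ℝ ψ x) :
    pd i (fun y => φ y + ψ y) x = pd i φ x + pd i ψ x := by
  unfold pd; rw [fderiv_fun_add hφ hψ]; simp

private lemma pd_sub {n : ℕ} {φ ψ : (Fin n → ℝ) → ℝ} {x : Fin n → ℝ} (i : Fin n)
    (hφ : DifferentiableAt ℝ φ x) (hψ : DifferentiableAt ℝ ψ x) :
    pd i (fun y => φ y - ψ y) x = pd i φ x - pd i ψ x := by
  unfold pd; rw [fderiv_fun_sub hφ hψ]; simp

private lemma pd_mul {n : ℕ} {φ ψ : (Fin n → ℝ) → ℝ} {x : Fin n → ℝ} (i : Fin n)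
    (hφ : DifferentiableAt ℝ φ x) (hψ : DifferentiableAt ℝ ψ x) :
    pd i (fun y => φ y * ψ y) x = pd i φ x * ψ x + φ x * pd i ψ x := by
  unfold pd; rw [fderiv_fun_mul hφ hψ]; simp [mul_comm]; ring

private lemma pd_neg {n : ℕ} {φ : (Fin n → ℝ) → ℝ} {x : Fin n → ℝ} (i : Fin n) :
    pd i (fun y => -φ y) x = -pd i φ x := by
  unfold pd; rw [fderiv_fun_neg]; simp

private lemma pd_cmul {n : ℕ} {φ : (Fin n → ℝ) → ℝ} {x : Fin n → ℝ} (i : Fin n) (c : ℝ)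
    (hφ : DifferentiableAt ℝ φ x) :
    pd i (fun y => c * φ y) x = c * pd i φ x := by
  unfold pd; rw [fderiv_const_mul hφ]; simp

private lemma pd_proj {n : ℕ} (i j : Fin n) (x : Fin n → ℝ) :
    pd i (fun y : Fin n → ℝ => y j) x = if j = i then 1 else 0 := by
  unfold pd
  have h : (fun y : Fin n → ℝ => y j)
      = ⇑(ContinuousLinearMap.proj (R := ℝ) (φ := fun _ : Fin n => ℝ) j) := rfl
  rw [h, ContinuousLinearMap.fderiv]
  simp [Pi.single_apply]

private lemma pd_inv {n : ℕ} {φ : (Fin n → ℝ) → ℝ} {x : Fin n → ℝ} (i : Fin n)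
    (hφ : DifferentiableAt ℝ φ x) (h0 : φ x ≠ 0) :
    pd i (fun y => (φ y)⁻¹) x = -((φ x)⁻¹ * pd i φ x * (φ x)⁻¹) := by
  have h2 : HasFDerivAt (fun y => (φ y)⁻¹)
      ((-ContinuousLinearMap.mulLeftRight ℝ ℝ (φ x)⁻¹ (φ x)⁻¹).comp (fderiv ℝ φ x)) x :=
    (hasFDerivAt_inv' h0).comp x hφ.hasFDerivAt
  unfold pd
  rw [h2.fderiv]
  simp [ContinuousLinearMap.mulLeftRight_apply]

private lemma contDiffOn_pd {n : ℕ} {v : (Fin n → ℝ) → ℝ} {U : Set (Fin n → ℝ)}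
    (hU : IsOpen U) (hv : ContDiffOn ℝ ∞ v U) (i : Fin n) :
    ContDiffOn ℝ ∞ (pd i v) U := by
  have h1 : ContDiffOn ℝ ∞ (fun y => fderiv ℝ v y) U :=
    hv.fderiv_of_isOpen hU (by decide)
  exact h1.clm_apply contDiffOn_const

private lemma diffAt_of_cd {n : ℕ} {v : (Fin n → ℝ) → ℝ} {U : Set (Fin n → ℝ)}
    (hU : IsOpen U) (hv : ContDiffOn ℝ ∞ v U) {x : Fin n → ℝ} (hx : x ∈ U) :
    DifferentiableAt ℝ v x :=
  (hv.contDiffAt (hU.mem_nhds hx)).differentiableAt (by decide)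

private lemma pd_comm {n : ℕ} {v : (Fin n → ℝ) → ℝ} {U : Set (Fin n → ℝ)}
    (hU : IsOpen U) (hv : ContDiffOn ℝ ∞ v U) {x : Fin n → ℝ} (hx : x ∈ U) (i j : Fin n) :
    pd i (pd j v) x = pd j (pd i v) x := by
  have hvx : ContDiffAt ℝ ∞ v x := hv.contDiffAt (hU.mem_nhds hx)
  have hsym : IsSymmSndFDerivAt ℝ v x := hvx.isSymmSndFDerivAt (by simp only [minSmoothness_of_isRCLikeNormedField]; decide)
  have hdf : DifferentiableAt ℝ (fderiv ℝ v) x :=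
    (hvx.fderiv_right (m := ∞) (by decide)).differentiableAt (by decide)
  have key : ∀ a b : Fin n, pd a (pd b v) x
      = fderiv ℝ (fderiv ℝ v) x (Pi.single a 1) (Pi.single b 1) := by
    intro a b
    unfold pd
    rw [fderiv_clm_apply (u := fun _ => Pi.single b 1) hdf (differentiableAt_const _)]
    simp
  rw [key, key, hsym (Pi.single i 1) (Pi.single j 1)]

/-! ### component functions -/

private def Ffun : (Fin 4 → ℝ) → ℝ := fun y => y 0 * y 2 + y 1 * y 3

private def Gfun (lam : ℝ) : (Fin 4 → ℝ) → ℝ :=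
  fun y => (y 0 - lam * y 1) * (y 3 + lam * y 2)⁻¹

private def X0f (u : (Fin 4 → ℝ) → ℝ) (lam : ℝ) : (Fin 4 → ℝ) → ℝ :=
  fun y => Gfun lam y - Ffun y * pd 0 (pd 1 u) y

private def X1f (u : (Fin 4 → ℝ) → ℝ) : (Fin 4 → ℝ) → ℝ :=
  fun y => Ffun y * pd 0 (pd 0 u) y

private def Y0f (u : (Fin 4 → ℝ) → ℝ) : (Fin 4 → ℝ) → ℝ :=
  fun y => Ffun y * pd 1 (pd 1 u) y

private def Y1f (u : (Fin 4 → ℝ) → ℝ) (lam : ℝ) : (Fin 4 → ℝ) → ℝ :=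
  fun y => -(Ffun y * pd 0 (pd 1 u) y) - Gfun lam y

private def Efun (u : (Fin 4 → ℝ) → ℝ) : (Fin 4 → ℝ) → ℝ :=
  fun y => pd 0 (pd 2 u) y + pd 1 (pd 3 u) y
    + Ffun y * (pd 0 (pd 0 u) y * pd 1 (pd 1 u) y - pd 0 (pd 1 u) y * pd 0 (pd 1 u) y)

/-- Lax pair (Frobenius integrability) for the deformed second heavenly
equation with `f = x₁x₃ + x₂x₄`. -/
theorem statement9 (U : Set (Fin 4 → ℝ)) (hU : IsOpen U)
    (u : (Fin 4 → ℝ) → ℝ) (hu : ContDiffOn ℝ ∞ u U)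
    (hsol : ∀ x ∈ U,
      pd2 0 2 u x + pd2 1 3 u x
        + (x 0 * x 2 + x 1 * x 3) * (pd2 0 0 u x * pd2 1 1 u x - (pd2 0 1 u x) ^ 2) = 0)
    (lam : ℝ) (hlam : ∀ x ∈ U, x 3 + lam * x 2 ≠ 0)
    (X Y : (Fin 4 → ℝ) → (Fin 4 → ℝ))
    (hX : X = fun x => (Pi.single 3 1 : Fin 4 → ℝ)
        + ((x 0 * x 2 + x 1 * x 3) * pd2 0 0 u x) • (Pi.single 1 1 : Fin 4 → ℝ)
        - ((x 0 * x 2 + x 1 * x 3) * pd2 0 1 u x) • (Pi.single 0 1 : Fin 4 → ℝ)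
        + ((x 0 - lam * x 1) / (x 3 + lam * x 2)) • (Pi.single 0 1 : Fin 4 → ℝ))
    (hY : Y = fun x => (Pi.single 2 1 : Fin 4 → ℝ)
        + ((x 0 * x 2 + x 1 * x 3) * pd2 1 1 u x) • (Pi.single 0 1 : Fin 4 → ℝ)
        - ((x 0 * x 2 + x 1 * x 3) * pd2 0 1 u x) • (Pi.single 1 1 : Fin 4 → ℝ)
        - ((x 0 - lam * x 1) / (x 3 + lam * x 2)) • (Pi.single 1 1 : Fin 4 → ℝ)) :
    ∀ x ∈ U, lieBr X Y x ∈ Submodule.span ℝ {X x, Y x} := by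
  intro x hx
  have hd : x 3 + lam * x 2 ≠ 0 := hlam x hx
  have hr : (x 3 + lam * x 2) * (x 3 + lam * x 2)⁻¹ = 1 := mul_inv_cancel₀ hd
  -- differentiability of coordinates and second partials
  have hproj : ∀ k : Fin 4, DifferentiableAt ℝ (fun y : Fin 4 → ℝ => y k) x := fun k =>
    (ContinuousLinearMap.proj (R := ℝ) (φ := fun _ : Fin 4 => ℝ) k).differentiableAt
  have hcd1 : ∀ q : Fin 4, ContDiffOn ℝ ∞ (pd q u) U := fun q => contDiffOn_pd hU hu q
  have hpd2 : ∀ p q : Fin 4, DifferentiableAt ℝ (pd p (pd q u)) x := fun p q =>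
    diffAt_of_cd hU (contDiffOn_pd hU (hcd1 q) p) hx
  have hFd : DifferentiableAt ℝ Ffun x :=
    ((hproj 0).mul (hproj 2)).add ((hproj 1).mul (hproj 3))
  have hnumd : DifferentiableAt ℝ (fun y : Fin 4 → ℝ => y 0 - lam * y 1) x :=
    (hproj 0).sub ((hproj 1).const_mul lam)
  have hdend : DifferentiableAt ℝ (fun y : Fin 4 → ℝ => y 3 + lam * y 2) x :=
    (hproj 3).add ((hproj 2).const_mul lam)
  have hinvd : DifferentiableAt ℝ (fun y : Fin 4 → ℝ => (y 3 + lam * y 2)⁻¹) x :=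
    hdend.inv hd
  have hGd : DifferentiableAt ℝ (Gfun lam) x := hnumd.mul hinvd
  -- partial derivatives of F
  have hFpd : ∀ j, pd j Ffun x
      = (if (0:Fin 4) = j then (1:ℝ) else 0) * x 2 + x 0 * (if (2:Fin 4) = j then 1 else 0)
        + ((if (1:Fin 4) = j then (1:ℝ) else 0) * x 3
            + x 1 * (if (3:Fin 4) = j then 1 else 0)) := by
    intro j
    unfold Ffun
    rw [pd_add j ((hproj 0).fun_mul (hproj 2)) ((hproj 1).fun_mul (hproj 3)),
      pd_mul j (hproj 0) (hproj 2), pd_mul j (hproj 1) (hproj 3)]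
    simp only [pd_proj]
  have hF0 : pd 0 Ffun x = x 2 := by rw [hFpd 0]; simp
  have hF1 : pd 1 Ffun x = x 3 := by rw [hFpd 1]; simp
  have hF2 : pd 2 Ffun x = x 0 := by rw [hFpd 2]; simp
  have hF3 : pd 3 Ffun x = x 1 := by rw [hFpd 3]; simp
  have hFx : Ffun x = x 0 * x 2 + x 1 * x 3 := rfl
  -- partial derivatives of G
  have hGpd : ∀ j, pd j (Gfun lam) x
      = ((if (0:Fin 4) = j then (1:ℝ) else 0) - lam * (if (1:Fin 4) = j then 1 else 0))
          * (x 3 + lam * x 2)⁻¹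
        + (x 0 - lam * x 1) * -((x 3 + lam * x 2)⁻¹
            * ((if (3:Fin 4) = j then (1:ℝ) else 0) + lam * (if (2:Fin 4) = j then 1 else 0))
            * (x 3 + lam * x 2)⁻¹) := by
    intro j
    unfold Gfun
    rw [pd_mul j hnumd hinvd, pd_sub j (hproj 0) ((hproj 1).const_mul lam),
      pd_cmul j lam (hproj 1), pd_inv j hdend hd,
      pd_add j (hproj 3) ((hproj 2).const_mul lam), pd_cmul j lam (hproj 2)]
    simp only [pd_proj]
  have hG0 : pd 0 (Gfun lam) x = (x 3 + lam * x 2)⁻¹ := by rw [hGpd 0]; simp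
  have hG1 : pd 1 (Gfun lam) x = -(lam * (x 3 + lam * x 2)⁻¹) := by rw [hGpd 1]; simp
  have hG2 : pd 2 (Gfun lam) x
      = -(lam * ((x 0 - lam * x 1) * ((x 3 + lam * x 2)⁻¹ * (x 3 + lam * x 2)⁻¹))) := by
    rw [hGpd 2]; simp [mul_comm, mul_assoc, mul_left_comm]
  have hG3 : pd 3 (Gfun lam) x
      = -((x 0 - lam * x 1) * ((x 3 + lam * x 2)⁻¹ * (x 3 + lam * x 2)⁻¹)) := by
    rw [hGpd 3]; simp [mul_comm, mul_assoc, mul_left_comm]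
  -- third-derivative symmetry
  have houter : ∀ m p q : Fin 4, pd m (pd p (pd q u)) x = pd p (pd m (pd q u)) x :=
    fun m p q => pd_comm hU (hcd1 q) hx m p
  have hinner : ∀ m p q : Fin 4, pd m (pd p (pd q u)) x = pd m (pd q (pd p u)) x :=
    fun m p q => pd_congr m
      (Filter.eventuallyEq_of_mem (hU.mem_nhds hx) (fun y hy => pd_comm hU hu hy p q))
  have h100 : pd 1 (pd 0 (pd 0 u)) x = pd 0 (pd 0 (pd 1 u)) x :=
    (houter 1 0 0).trans (hinner 0 1 0)
  have h200 : pd 2 (pd 0 (pd 0 u)) x = pd 0 (pd 0 (pd 2 u)) x :=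
    (houter 2 0 0).trans (hinner 0 2 0)
  have h300 : pd 3 (pd 0 (pd 0 u)) x = pd 0 (pd 0 (pd 3 u)) x :=
    (houter 3 0 0).trans (hinner 0 3 0)
  have h101 : pd 1 (pd 0 (pd 1 u)) x = pd 0 (pd 1 (pd 1 u)) x := houter 1 0 1
  have h201 : pd 2 (pd 0 (pd 1 u)) x = pd 0 (pd 1 (pd 2 u)) x :=
    (houter 2 0 1).trans (hinner 0 2 1)
  have h301 : pd 3 (pd 0 (pd 1 u)) x = pd 0 (pd 1 (pd 3 u)) x :=
    (houter 3 0 1).trans (hinner 0 3 1)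
  have h211 : pd 2 (pd 1 (pd 1 u)) x = pd 1 (pd 1 (pd 2 u)) x :=
    (houter 2 1 1).trans (hinner 1 2 1)
  have h311 : pd 3 (pd 1 (pd 1 u)) x = pd 1 (pd 1 (pd 3 u)) x :=
    (houter 3 1 1).trans (hinner 1 3 1)
  have h102 : pd 1 (pd 0 (pd 2 u)) x = pd 0 (pd 1 (pd 2 u)) x := houter 1 0 2
  -- the PDE and its differentiated forms
  have hEzero : ∀ y ∈ U, Efun u y = 0 := by
    intro y hy
    have h := hsol y hy
    simp only [pd2] at h
    unfold Efun Ffun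
    linear_combination h
  have hEpd : ∀ j : Fin 4, pd j (Efun u) x = 0 := by
    intro j
    have hev : Efun u =ᶠ[nhds x] (fun _ => (0:ℝ)) :=
      Filter.eventuallyEq_of_mem (hU.mem_nhds hx) (fun y hy => hEzero y hy)
    rw [pd_congr j hev]
    unfold pd
    rw [fderiv_fun_const]
    simp
  have hEexp : ∀ j : Fin 4, pd j (Efun u) x
      = pd j (pd 0 (pd 2 u)) x + pd j (pd 1 (pd 3 u)) x
        + (pd j Ffun x * (pd 0 (pd 0 u) x * pd 1 (pd 1 u) x - pd 0 (pd 1 u) x * pd 0 (pd 1 u) x)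
          + Ffun x * ((pd j (pd 0 (pd 0 u)) x * pd 1 (pd 1 u) x
                + pd 0 (pd 0 u) x * pd j (pd 1 (pd 1 u)) x)
              - (pd j (pd 0 (pd 1 u)) x * pd 0 (pd 1 u) x
                + pd 0 (pd 1 u) x * pd j (pd 0 (pd 1 u)) x))) := by
    intro j
    unfold Efun
    rw [pd_add j ((hpd2 0 2).fun_add (hpd2 1 3))
        (hFd.fun_mul (((hpd2 0 0).fun_mul (hpd2 1 1)).fun_sub ((hpd2 0 1).fun_mul (hpd2 0 1)))),
      pd_add j (hpd2 0 2) (hpd2 1 3),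
      pd_mul j hFd (((hpd2 0 0).fun_mul (hpd2 1 1)).fun_sub ((hpd2 0 1).fun_mul (hpd2 0 1))),
      pd_sub j ((hpd2 0 0).fun_mul (hpd2 1 1)) ((hpd2 0 1).fun_mul (hpd2 0 1)),
      pd_mul j (hpd2 0 0) (hpd2 1 1), pd_mul j (hpd2 0 1) (hpd2 0 1)]
  have hE0 := (hEexp 0).symm.trans (hEpd 0)
  have hE1 := (hEexp 1).symm.trans (hEpd 1)
  rw [hF0, hFx] at hE0
  rw [hF1, hFx, h102, h100, h101] at hE1
  -- rewrite X and Y in component form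
  have hXeq : X = fun y => X0f u lam y • (Pi.single 0 1 : Fin 4 → ℝ)
      + X1f u y • (Pi.single 1 1 : Fin 4 → ℝ) + (Pi.single 3 1 : Fin 4 → ℝ) := by
    rw [hX]
    funext y
    funext i
    simp only [X0f, X1f, Gfun, Ffun, pd2, Pi.add_apply, Pi.sub_apply, Pi.smul_apply,
      smul_eq_mul, Pi.single_apply, div_eq_mul_inv]
    fin_cases i <;> simp <;> ring
  have hYeq : Y = fun y => Y0f u y • (Pi.single 0 1 : Fin 4 → ℝ)
      + Y1f u lam y • (Pi.single 1 1 : Fin 4 → ℝ) + (Pi.single 2 1 : Fin 4 → ℝ) := by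
    rw [hY]
    funext y
    funext i
    simp only [Y0f, Y1f, Gfun, Ffun, pd2, Pi.add_apply, Pi.sub_apply, Pi.smul_apply,
      smul_eq_mul, Pi.single_apply, div_eq_mul_inv]
    fin_cases i <;> simp <;> ring
  -- differentiability of the scalar components
  have hX0d : DifferentiableAt ℝ (X0f u lam) x := hGd.sub (hFd.mul (hpd2 0 1))
  have hX1d : DifferentiableAt ℝ (X1f u) x := hFd.mul (hpd2 0 0)
  have hY0d : DifferentiableAt ℝ (Y0f u) x := hFd.mul (hpd2 1 1)
  have hY1d : DifferentiableAt ℝ (Y1f u lam) x := (hFd.mul (hpd2 0 1)).neg.sub hGd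
  -- Fréchet derivatives of X and Y
  have hXF : HasFDerivAt X ((fderiv ℝ (X0f u lam) x).smulRight (Pi.single 0 1 : Fin 4 → ℝ)
      + (fderiv ℝ (X1f u) x).smulRight (Pi.single 1 1 : Fin 4 → ℝ)) x := by
    rw [hXeq]
    exact ((hX0d.hasFDerivAt.smul_const _).add (hX1d.hasFDerivAt.smul_const _)).add_const _
  have hYF : HasFDerivAt Y ((fderiv ℝ (Y0f u) x).smulRight (Pi.single 0 1 : Fin 4 → ℝ)
      + (fderiv ℝ (Y1f u lam) x).smulRight (Pi.single 1 1 : Fin 4 → ℝ)) x := by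
    rw [hYeq]
    exact ((hY0d.hasFDerivAt.smul_const _).add (hY1d.hasFDerivAt.smul_const _)).add_const _
  -- directional derivative expansion
  have hdir : ∀ (φ : (Fin 4 → ℝ) → ℝ) (w : Fin 4 → ℝ), fderiv ℝ φ x w
      = w 0 * pd 0 φ x + w 1 * pd 1 φ x + w 2 * pd 2 φ x + w 3 * pd 3 φ x := by
    intro φ w
    have hw : w = w 0 • (Pi.single 0 1 : Fin 4 → ℝ) + w 1 • (Pi.single 1 1 : Fin 4 → ℝ)
        + w 2 • (Pi.single 2 1 : Fin 4 → ℝ) + w 3 • (Pi.single 3 1 : Fin 4 → ℝ) := by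
      funext i
      fin_cases i <;> simp [Pi.single_apply]
    conv_lhs => rw [hw]
    simp only [map_add, map_smul, smul_eq_mul, pd]
  -- component values of X and Y at x
  have hXx0 : X x 0 = X0f u lam x := by rw [hXeq]; simp [Pi.single_apply]
  have hXx1 : X x 1 = X1f u x := by rw [hXeq]; simp [Pi.single_apply]
  have hXx2 : X x 2 = 0 := by rw [hXeq]; simp [Pi.single_apply]
  have hXx3 : X x 3 = 1 := by rw [hXeq]; simp [Pi.single_apply]
  have hYx0 : Y x 0 = Y0f u x := by rw [hYeq]; simp [Pi.single_apply]
  have hYx1 : Y x 1 = Y1f u lam x := by rw [hYeq]; simp [Pi.single_apply]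
  have hYx2 : Y x 2 = 1 := by rw [hYeq]; simp [Pi.single_apply]
  have hYx3 : Y x 3 = 0 := by rw [hYeq]; simp [Pi.single_apply]
  -- partial derivatives of the scalar components
  have hpdX0 : ∀ j, pd j (X0f u lam) x
      = pd j (Gfun lam) x - (pd j Ffun x * pd 0 (pd 1 u) x + Ffun x * pd j (pd 0 (pd 1 u)) x) := by
    intro j
    unfold X0f
    rw [pd_sub j hGd (hFd.fun_mul (hpd2 0 1)), pd_mul j hFd (hpd2 0 1)]
  have hpdX1 : ∀ j, pd j (X1f u) x
      = pd j Ffun x * pd 0 (pd 0 u) x + Ffun x * pd j (pd 0 (pd 0 u)) x := by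
    intro j
    unfold X1f
    rw [pd_mul j hFd (hpd2 0 0)]
  have hpdY0 : ∀ j, pd j (Y0f u) x
      = pd j Ffun x * pd 1 (pd 1 u) x + Ffun x * pd j (pd 1 (pd 1 u)) x := by
    intro j
    unfold Y0f
    rw [pd_mul j hFd (hpd2 1 1)]
  have hpdY1 : ∀ j, pd j (Y1f u lam) x
      = -(pd j Ffun x * pd 0 (pd 1 u) x + Ffun x * pd j (pd 0 (pd 1 u)) x)
        - pd j (Gfun lam) x := by
    intro j
    unfold Y1f
    rw [pd_sub j (hFd.fun_mul (hpd2 0 1)).fun_neg hGd, pd_neg j, pd_mul j hFd (hpd2 0 1)]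
  -- the two scalar identities
  have hX0x : X0f u lam x = (x 0 - lam * x 1) * (x 3 + lam * x 2)⁻¹
      - (x 0 * x 2 + x 1 * x 3) * pd 0 (pd 1 u) x := rfl
  have hX1x : X1f u x = (x 0 * x 2 + x 1 * x 3) * pd 0 (pd 0 u) x := rfl
  have hY0x : Y0f u x = (x 0 * x 2 + x 1 * x 3) * pd 1 (pd 1 u) x := rfl
  have hY1x : Y1f u lam x = -((x 0 * x 2 + x 1 * x 3) * pd 0 (pd 1 u) x)
      - (x 0 - lam * x 1) * (x 3 + lam * x 2)⁻¹ := rfl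
  have key0 : fderiv ℝ (Y0f u) x (X x) = fderiv ℝ (X0f u lam) x (Y x) := by
    rw [hdir _ (X x), hdir _ (Y x), hXx0, hXx1, hXx2, hXx3, hYx0, hYx1, hYx2, hYx3]
    simp only [hpdY0, hpdX0, hF0, hF1, hF2, hF3, hG0, hG1, hG2, hG3, hFx,
      h100, h200, h300, h101, h201, h301, h211, h311, hX0x, hX1x, hY0x, hY1x]
    linear_combination (x 0 * x 2 + x 1 * x 3) * hE1
      + (-(x 0 * pd 0 (pd 1 u) x + x 1 * pd 1 (pd 1 u) x)) * hr
  have key1 : fderiv ℝ (Y1f u lam) x (X x) = fderiv ℝ (X1f u) x (Y x) := by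
    rw [hdir _ (X x), hdir _ (Y x), hXx0, hXx1, hXx2, hXx3, hYx0, hYx1, hYx2, hYx3]
    simp only [hpdY1, hpdX1, hF0, hF1, hF2, hF3, hG0, hG1, hG2, hG3, hFx,
      h100, h200, h300, h101, h201, h301, h211, h311, hX0x, hX1x, hY0x, hY1x]
    linear_combination (-(x 0 * x 2 + x 1 * x 3)) * hE0
      + (x 0 * pd 0 (pd 0 u) x + x 1 * pd 0 (pd 1 u) x) * hr
  have hzero : lieBr X Y x = 0 := by
    unfold lieBr
    rw [hXF.fderiv, hYF.fderiv]
    simp only [ContinuousLinearMap.add_apply, ContinuousLinearMap.smulRight_apply]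
    rw [key0, key1]
    simp
  rw [hzero]
  exact Submodule.zero_mem _
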